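/- (Ambrose's structure theorem.) Let H be a nonzero complex Hilbert space equipped with a continuous bilinear multiplication (x,y) ↦ x·y making H a commutative associative (not necessarily unital) Banach algebra with trivial annihilator, such that for each x ∈ H there exists x* ∈ H with ⟨x·y, z⟩ = ⟨y, x*·z⟩ for all y, z ∈ H. Then H is isomorphic as an H*-algebra to a Hilbert space direct sum of one-dimensional algebras: there exist an index set ι, nonzero complex scalars (λ_i)_{i ∈ ι}, and a unitary isomorphism U : H ≃ lp(fun _ : ι => ℂ) 2 such that (U(x·y))_i = λ_i · (U x)_i · (U y)_i for all x, y ∈ H and all i ∈ ι. -/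

import Mathlib

open scoped ENNReal

open scoped ComplexConjugate


local notation "⟪" x ", " y "⟫" => @inner ℂ _ _ x y

private lemma isClosed_set_centralizer {H : Type} [NormedAddCommGroup H]
    [InnerProductSpace ℂ H] [CompleteSpace H] (s : Set (H →L[ℂ] H)) :
    IsClosed (Set.centralizer s) := by
  have h : Set.centralizer s = ⋂ g ∈ s, {z : H →L[ℂ] H | g * z = z * g} := by
    ext z; simp [Set.mem_centralizer_iff]
  rw [h]
  exact isClosed_biInter fun g hg =>
    isClosed_eq (continuous_const.mul continuous_id) (continuous_id.mul continuous_const)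

private lemma ambrose_key (H : Type) [NormedAddCommGroup H] [InnerProductSpace ℂ H]
    [CompleteSpace H]
    (m : H →L[ℂ] H →L[ℂ] H)
    (hann : ∀ x : H, (∀ y : H, m x y = 0) → x = 0)
    (hmm : ∀ x y : H, (m x) * (m y) = m (m x y))
    (hScomm : ∀ x y : H, (m x) * (m y) = (m y) * (m x))
    (hstar : ∀ x : H, ∃ x' : H, star (m x) = m x')
    (z : H)
    (hz : ∀ g : H, g ≠ 0 →
      (∀ x y : H, ⟪g, m x y⟫ = ⟪g, x⟫ * ⟪g, y⟫) → ⟪g, z⟫ = 0) :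
    z = 0 := by
  classical
  set S : Set (H →L[ℂ] H) := Set.range (fun x : H => m x) with hS
  have hSstar : ∀ T ∈ S, star T ∈ S := by
    rintro T ⟨x, rfl⟩
    obtain ⟨x', hx'⟩ := hstar x
    exact ⟨x', hx'.symm⟩
  have hScomm' : ∀ T ∈ S, ∀ T' ∈ S, T * T' = T' * T := by
    rintro T ⟨x, rfl⟩ T' ⟨y, rfl⟩
    exact hScomm x y
  set B₁ : StarSubalgebra ℂ (H →L[ℂ] H) := StarSubalgebra.centralizer ℂ S with hB₁
  set A : StarSubalgebra ℂ (H →L[ℂ] H) :=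
    StarSubalgebra.centralizer ℂ (B₁ : Set (H →L[ℂ] H)) with hA
  have hSB : ∀ T ∈ S, T ∈ B₁ := by
    intro T hT
    rw [hB₁, StarSubalgebra.mem_centralizer_iff]
    intro g hg
    exact ⟨(hScomm' g hg T hT), (hScomm' _ (hSstar g hg) T hT)⟩
  have hmA : ∀ x : H, m x ∈ A := by
    intro x
    rw [hA, StarSubalgebra.mem_centralizer_iff]
    intro g hg
    constructor
    · exact ((StarSubalgebra.mem_centralizer_iff ℂ).mp hg (m x) ⟨x, rfl⟩).1.symm
    · exact ((StarSubalgebra.mem_centralizer_iff ℂ).mp (star_mem hg) (m x) ⟨x, rfl⟩).1.symm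
  have hAB : ∀ a, a ∈ A → a ∈ B₁ := by
    intro a ha
    rw [hB₁, StarSubalgebra.mem_centralizer_iff]
    intro g hg
    exact (StarSubalgebra.mem_centralizer_iff ℂ).mp ha g (hSB g hg)
  have hAcomm : ∀ a b : ↥A, a * b = b * a := by
    rintro ⟨a, ha⟩ ⟨b, hb⟩
    exact Subtype.ext (((StarSubalgebra.mem_centralizer_iff ℂ).mp ha b (hAB b hb)).1.symm)
  haveI hAclosed : IsClosed (A : Set (H →L[ℂ] H)) := by
    rw [hA, StarSubalgebra.coe_centralizer]
    exact isClosed_set_centralizer _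
  letI : CommCStarAlgebra ↥A :=
    { (inferInstance : CStarAlgebra ↥A) with mul_comm := hAcomm }
  -- the element of interest
  set TL : H →ₗ[ℂ] ↥A :=
    { toFun := fun x => ⟨m x, hmA x⟩
      map_add' := fun x y => Subtype.ext (by simp)
      map_smul' := fun c x => Subtype.ext (by simp) } with hTL
  have hTLcont : ∀ x : H, ‖TL x‖ ≤ ‖m‖ * ‖x‖ := fun x => m.le_opNorm x
  set TLc : H →L[ℂ] ↥A := LinearMap.mkContinuous TL ‖m‖ hTLcont with hTLc
  have key : ∀ φ : WeakDual.characterSpace ℂ ↥A, φ ⟨m z, hmA z⟩ = 0 := by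
    intro φ
    set Φ : ↥A →L[ℂ] ℂ :=
      { toLinearMap :=
          { toFun := φ
            map_add' := map_add φ
            map_smul' := map_smul φ }
        cont := map_continuous φ } with hΦ
    set g : H := (InnerProductSpace.toDual ℂ H).symm (Φ.comp TLc) with hgdef
    have hg : ∀ x : H, ⟪g, x⟫ = φ ⟨m x, hmA x⟩ := by
      intro x
      rw [hgdef]
      exact InnerProductSpace.toDual_symm_apply
    have hgmul : ∀ x y : H, ⟪g, m x y⟫ = ⟪g, x⟫ * ⟪g, y⟫ := by
      intro x y
      rw [hg, hg, hg, ← map_mul φ]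
      congr 1
      exact Subtype.ext (hmm x y).symm
    have : ⟪g, z⟫ = 0 := by
      by_cases hgne : g = 0
      · rw [hgne, inner_zero_left]
      · exact hz g hgne hgmul
    rw [hg] at this
    exact this
  have hT0 : WeakDual.gelfandTransform ℂ ↥A ⟨m z, hmA z⟩ = 0 := by
    ext φ
    simpa using key φ
  have : (⟨m z, hmA z⟩ : ↥A) = 0 := by
    apply (gelfandTransform_isometry ↥A).injective
    rw [hT0, map_zero]
  have hmz : m z = 0 := congrArg Subtype.val this
  exact hann z fun y => by rw [hmz]; rfl

/-- Ambrose's structure theorem: a nonzero complex Hilbert space `H`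
with a continuous bilinear multiplication `m` making it a commutative associative
(not necessarily unital) Banach algebra with trivial annihilator, such that every
`x` admits an adjoint element `x*` with `⟪x·y, z⟫ = ⟪y, x*·z⟫`, is isomorphic as an
H*-algebra to a Hilbert space (`lp`-2) direct sum of one-dimensional algebras. -/
theorem ambrose_structure_theorem
    (H : Type) [NormedAddCommGroup H] [InnerProductSpace ℂ H] [CompleteSpace H]
    [Nontrivial H]
    (m : H →L[ℂ] H →L[ℂ] H)
    (hcomm : ∀ x y : H, m x y = m y x)
    (hassoc : ∀ x y z : H, m (m x y) z = m x (m y z))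
    (hann : ∀ x : H, (∀ y : H, m x y = 0) → x = 0)
    (hadj : ∀ x : H, ∃ xs : H, ∀ y z : H,
      (inner ℂ (m x y) z : ℂ) = inner ℂ y (m xs z)) :
    ∃ (ι : Type) (lam : ι → ℂ), (∀ i, lam i ≠ 0) ∧
      ∃ U : H ≃ₗᵢ[ℂ] lp (fun _ : ι => ℂ) 2,
        ∀ (x y : H) (i : ι), U (m x y) i = lam i * U x i * U y i := by
  classical
  -- the involution
  set st : H → H := fun x => (hadj x).choose with hstdef
  have hst : ∀ x y z : H, ⟪m x y, z⟫ = ⟪y, m (st x) z⟫ := fun x => (hadj x).choose_spec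
  have hst' : ∀ x y z : H, ⟪m (st x) y, z⟫ = ⟪y, m x z⟫ := by
    intro x y z
    have h := congrArg (starRingEnd ℂ) (hst x z y)
    rw [inner_conj_symm, inner_conj_symm] at h
    exact h.symm
  have huniq : ∀ a b : H, (∀ y z : H, ⟪y, m a z⟫ = ⟪y, m b z⟫) → a = b := by
    intro a b h
    have h2 : ∀ z : H, m a z = m b z := fun z => ext_inner_left ℂ (fun y => h y z)
    have h3 : ∀ z : H, m (a - b) z = 0 := by
      intro z
      rw [map_sub m a b]
      simp [ContinuousLinearMap.sub_apply, h2 z]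
    exact sub_eq_zero.mp (hann (a - b) h3)
  have hstst : ∀ x : H, st (st x) = x := by
    intro x
    apply huniq
    intro y z
    rw [← hst (st x) y z]
    exact hst' x y z
  -- operator-level facts
  have hmm : ∀ x y : H, (m x) * (m y) = m (m x y) := by
    intro x y
    ext w
    exact (hassoc x y w).symm
  have hScommOp : ∀ x y : H, (m x) * (m y) = (m y) * (m x) := by
    intro x y
    rw [hmm, hmm, hcomm]
  have hstarOp : ∀ x : H, ∃ x' : H, star (m x) = m x' := by
    intro x
    refine ⟨st x, ?_⟩
    rw [ContinuousLinearMap.star_eq_adjoint]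
    exact ((ContinuousLinearMap.eq_adjoint_iff (m (st x)) (m x)).mpr
      (fun u w => hst' x u w)).symm
  -- the set of "points" (multiplicative Riesz vectors)
  set PTS : Set H := {g | g ≠ 0 ∧ ∀ x y : H, ⟪g, m x y⟫ = ⟪g, x⟫ * ⟪g, y⟫} with hPTS
  -- every point is a joint eigenvector
  have heig : ∀ g ∈ PTS, ∀ x : H, m x g = ⟪g, x⟫ • g := by
    rintro g ⟨hg0, hgm⟩ x
    have e1 : ∀ w : H, m (st w) g = (starRingEnd ℂ ⟪g, w⟫) • g := by
      intro w
      apply ext_inner_left ℂ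
      intro y
      rw [inner_smul_right, ← hst w y g, ← inner_conj_symm (m w y) g, hgm w y, map_mul,
        inner_conj_symm, inner_conj_symm y g]
    have e2 : ∀ w : H, m w g = (starRingEnd ℂ ⟪g, st w⟫) • g := by
      intro w
      have := e1 (st w)
      rwa [hstst w] at this
    have hgg : ⟪g, g⟫ ≠ 0 := inner_self_ne_zero.mpr hg0
    have h1 : ⟪g, m x g⟫ = ⟪g, x⟫ * ⟪g, g⟫ := hgm x g
    have h2 : ⟪g, m x g⟫ = (starRingEnd ℂ ⟪g, st x⟫) * ⟪g, g⟫ := by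
      rw [e2 x, inner_smul_right]
    have hc : (starRingEnd ℂ ⟪g, st x⟫) = ⟪g, x⟫ := mul_right_cancel₀ hgg (h2.symm.trans h1)
    rw [e2 x, hc]
  -- distinct points are orthogonal
  have orth : ∀ e ∈ PTS, ∀ f ∈ PTS, e ≠ f → ⟪e, f⟫ = (0 : ℂ) := by
    intro e he f hf hef
    by_contra hne
    have hall : ∀ x : H, ⟪e, x⟫ = ⟪f, x⟫ := by
      intro x
      have h1 : ⟪e, m x f⟫ = ⟪e, x⟫ * ⟪e, f⟫ := he.2 x f
      have h2 : ⟪e, m x f⟫ = ⟪f, x⟫ * ⟪e, f⟫ := by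
        rw [heig f hf x, inner_smul_right]
      exact mul_right_cancel₀ hne (h1.symm.trans h2)
    have hz : ⟪e - f, e - f⟫ = (0 : ℂ) := by
      rw [inner_sub_left, hall (e - f), sub_self]
    exact hef (sub_eq_zero.mp (inner_self_eq_zero.mp hz))
  -- the orthonormal family
  set v : ↥PTS → H := fun e => ((‖(e : H)‖ : ℂ))⁻¹ • (e : H) with hv
  have hnz : ∀ i : ↥PTS, ((‖(i : H)‖ : ℂ)) ≠ 0 := by
    intro i
    simp only [ne_eq, Complex.ofReal_eq_zero, norm_eq_zero]
    exact i.2.1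
  have hinner_v : ∀ (i : ↥PTS) (x : H), ⟪v i, x⟫ = ((‖(i : H)‖ : ℂ))⁻¹ * ⟪(i : H), x⟫ := by
    intro i x
    rw [hv]
    simp only [inner_smul_left, map_inv₀, Complex.conj_ofReal]
  have honv : Orthonormal ℂ v := by
    rw [orthonormal_iff_ite]
    intro i j
    by_cases h : i = j
    · subst h
      rw [if_pos rfl, hinner_v, hv]
      simp only [inner_smul_right, inner_self_eq_norm_sq_to_K]
      have hne := hnz i
      field_simp
      rfl
    · rw [if_neg h, hinner_v, hv]
      simp only [inner_smul_right]
      rw [orth (i : H) i.2 (j : H) j.2 (fun hc => h (Subtype.ext hc))]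
      ring
  have htotal : ⊤ ≤ (Submodule.span ℂ (Set.range v)).topologicalClosure := by
    have hbot : (Submodule.span ℂ (Set.range v))ᗮ = ⊥ := by
      rw [Submodule.eq_bot_iff]
      intro z hzmem
      have hz0 : ∀ i : ↥PTS, ⟪v i, z⟫ = (0 : ℂ) := fun i =>
        (Submodule.mem_orthogonal _ z).mp hzmem (v i)
          (Submodule.subset_span (Set.mem_range_self i))
      apply ambrose_key H m hann hmm hScommOp hstarOp z
      intro g hg0 hgm
      have hi : g ∈ PTS := ⟨hg0, hgm⟩
      have h0 := hz0 ⟨g, hi⟩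
      rw [hinner_v] at h0
      rcases mul_eq_zero.mp h0 with h | h
      · exact absurd h (inv_ne_zero (hnz ⟨g, hi⟩))
      · exact h
    exact (Submodule.topologicalClosure_eq_top_iff.mpr hbot).ge
  set b : HilbertBasis (↥PTS) ℂ H := HilbertBasis.mk honv htotal with hb
  have hbv : ∀ (i : ↥PTS) (x : H), b.repr x i = ⟪v i, x⟫ := by
    intro i x
    rw [b.repr_apply_apply, hb, HilbertBasis.coe_mk]
  refine ⟨↥PTS, fun i => ((‖(i : H)‖ : ℂ)), fun i => hnz i, b.repr, ?_⟩
  intro x y i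
  rw [hbv, hbv, hbv, hinner_v, hinner_v, hinner_v, i.2.2 x y]
  have hne := hnz i
  field_simp
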